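/- For every real x, the series ∑_{n=1}^∞ (1/n) (x²/(1+x²))^(n/2) · sin( n · arcsin( 1/√(1+x²) ) ) converges and sgn(x) times its sum equals arctan(x), where sgn(y) = −1 if y < 0 and sgn(y) = 1 if y ≥ 0. -/

import Mathlib

/-- The modified signum function: `-1` for negative inputs, `1` otherwise. -/
noncomputable def sgn (y : ℝ) : ℝ := if y < 0 then -1 else 1

theorem arctan_series_sgn (x : ℝ) :
    Summable (fun n : ℕ =>
      (1 / ((n : ℝ) + 1)) * (x ^ 2 / (1 + x ^ 2)) ^ (((n : ℝ) + 1) / 2) *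
        Real.sin (((n : ℝ) + 1) * Real.arcsin (1 / Real.sqrt (1 + x ^ 2)))) ∧
    sgn x * ∑' n : ℕ,
      (1 / ((n : ℝ) + 1)) * (x ^ 2 / (1 + x ^ 2)) ^ (((n : ℝ) + 1) / 2) *
        Real.sin (((n : ℝ) + 1) * Real.arcsin (1 / Real.sqrt (1 + x ^ 2)))
      = Real.arctan x := by
  set s : ℝ := Real.sqrt (1 + x ^ 2) with hs
  have hx2 : (0:ℝ) < 1 + x ^ 2 := by positivity
  have hs0 : 0 < s := Real.sqrt_pos.mpr hx2
  have hs2 : s ^ 2 = 1 + x ^ 2 := Real.sq_sqrt hx2.le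
  set r : ℝ := |x| / s with hr
  have hr0 : 0 ≤ r := by positivity
  have hra : r ^ 2 = x ^ 2 / (1 + x ^ 2) := by
    rw [hr, div_pow, sq_abs, hs2]
  have hsqrta : Real.sqrt (x ^ 2 / (1 + x ^ 2)) = r := by
    rw [← hra, Real.sqrt_sq hr0]
  have hr1 : r < 1 := by
    rw [← Real.sqrt_one, ← hsqrta]
    apply Real.sqrt_lt_sqrt (by positivity)
    rw [div_lt_one hx2]; linarith
  set θ : ℝ := Real.arcsin (1 / s) with hθ
  have hinv1 : 1 / s ≤ 1 := by
    rw [div_le_one hs0, ← Real.sqrt_one]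
    exact Real.sqrt_le_sqrt (by nlinarith)
  have hsinθ : Real.sin θ = 1 / s :=
    Real.sin_arcsin (by linarith [div_pos one_pos hs0]) hinv1
  have hcosθ : Real.cos θ = r := by
    rw [hθ, Real.cos_arcsin, ← hsqrta]
    congr 1
    rw [div_pow, one_pow, hs2]
    field_simp
    ring
  -- the complex number z = r * exp(θ I)
  set z : ℂ := (r : ℂ) * Complex.exp (θ * Complex.I) with hz
  have hznorm : ‖z‖ < 1 := by
    rw [hz, norm_mul, Complex.norm_exp_ofReal_mul_I, mul_one, Complex.norm_real,
      Real.norm_eq_abs, abs_of_nonneg hr0]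
    exact hr1
  have hsum := Complex.hasSum_taylorSeries_neg_log hznorm
  have hsum1 : HasSum (fun n : ℕ => z ^ (n + 1) / ((n + 1 : ℕ) : ℂ))
      (-Complex.log (1 - z)) := by
    rw [hasSum_nat_add_iff (f := fun n : ℕ => z ^ n / n) 1]
    simpa using hsum
  -- imaginary parts
  have hterm : ∀ n : ℕ,
      (z ^ (n + 1) / (n + 1 : ℕ)).im
        = (1 / ((n : ℝ) + 1)) * (x ^ 2 / (1 + x ^ 2)) ^ (((n : ℝ) + 1) / 2) *
          Real.sin (((n : ℝ) + 1) * θ) := by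
    intro n
    have hzpow : z ^ (n + 1)
        = ((r ^ (n + 1) : ℝ) : ℂ) * Complex.exp ((((n : ℝ) + 1) * θ : ℝ) * Complex.I) := by
      rw [hz, mul_pow, ← Complex.exp_nat_mul]
      push_cast
      ring_nf
    have hrpow : (x ^ 2 / (1 + x ^ 2)) ^ (((n : ℝ) + 1) / 2) = r ^ (n + 1) := by
      rw [show ((n : ℝ) + 1) / 2 = (1/2 : ℝ) * ((n + 1 : ℕ) : ℝ) by push_cast; ring,
        Real.rpow_mul (by positivity), Real.rpow_natCast, ← Real.sqrt_eq_rpow, hsqrta]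
    rw [hzpow, show ((n + 1 : ℕ) : ℂ) = (((n : ℝ) + 1 : ℝ) : ℂ) by push_cast; ring,
      Complex.div_ofReal_im, Complex.mul_im, Complex.ofReal_re, Complex.ofReal_im,
      Complex.exp_ofReal_mul_I_im, hrpow]
    ring
  have hsumIm : HasSum (fun n : ℕ =>
      (1 / ((n : ℝ) + 1)) * (x ^ 2 / (1 + x ^ 2)) ^ (((n : ℝ) + 1) / 2) *
        Real.sin (((n : ℝ) + 1) * θ))
      ((-Complex.log (1 - z)).im) := by
    have h := Complex.hasSum_im hsum1
    rwa [show (fun n : ℕ => (z ^ (n + 1) / ((n + 1 : ℕ) : ℂ)).im) = fun n : ℕ =>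
      (1 / ((n : ℝ) + 1)) * (x ^ 2 / (1 + x ^ 2)) ^ (((n : ℝ) + 1) / 2) *
        Real.sin (((n : ℝ) + 1) * θ) from funext hterm] at h
  -- compute the imaginary part of -log(1-z)
  have h1z : 1 - z = ((1 / s : ℝ) : ℂ) *
      (Complex.cos (-Real.arctan |x|) + Complex.sin (-Real.arctan |x|) * Complex.I) := by
    rw [hz, Complex.exp_mul_I]
    have hc : Real.cos (-Real.arctan |x|) = 1 / s := by
      rw [Real.cos_neg, Real.cos_arctan, hs, sq_abs]
    have hsn : Real.sin (-Real.arctan |x|) = -(|x| / s) := by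
      rw [Real.sin_neg, Real.sin_arctan, hs, sq_abs]
    simp only [← Complex.ofReal_neg, ← Complex.ofReal_cos, ← Complex.ofReal_sin]
    rw [hc, hsn, hcosθ, hsinθ]
    have hxx : |x| * |x| = x ^ 2 := by rw [← sq_abs]; ring
    apply Complex.ext <;>
      simp only [Complex.sub_re, Complex.sub_im, Complex.mul_re, Complex.mul_im, Complex.add_re,
        Complex.add_im, Complex.one_re, Complex.one_im, Complex.ofReal_re, Complex.ofReal_im,
        Complex.I_re, Complex.I_im, Complex.ofReal_neg, Complex.neg_re, Complex.neg_im,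
        hr, one_div, mul_zero, zero_mul, sub_zero, add_zero, neg_zero, mul_one, zero_sub,
        zero_add, neg_neg, mul_neg, neg_mul]
    · field_simp
      nlinarith [hs2, hxx]
    · field_simp
  have harg : Complex.arg (1 - z) = -Real.arctan |x| := by
    rw [h1z]
    have h1s : (0:ℝ) < 1 / s := by positivity
    rw [show ((1 / s : ℝ) : ℂ) * (Complex.cos (-Real.arctan |x|) + Complex.sin (-Real.arctan |x|) * Complex.I)
        = ↑(1/s) * (Complex.cos ↑(-Real.arctan |x|) + Complex.sin ↑(-Real.arctan |x|) * Complex.I) by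
        push_cast; ring]
    exact Complex.arg_mul_cos_add_sin_mul_I h1s
      ⟨by have := Real.arctan_lt_pi_div_two |x|; linarith [Real.pi_gt_three],
       by
        have h0 : (0:ℝ) ≤ Real.arctan |x| := by
          rw [← Real.arctan_zero]
          exact (Real.arctan_strictMono.monotone (abs_nonneg x))
        linarith [Real.pi_gt_three]⟩
  have hImlog : (-Complex.log (1 - z)).im = Real.arctan |x| := by
    rw [Complex.neg_im, Complex.log_im, harg, neg_neg]
  rw [hImlog] at hsumIm
  refine ⟨hsumIm.summable, ?_⟩
  rw [hsumIm.tsum_eq, sgn]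
  rcases lt_or_ge x 0 with hx | hx
  · rw [if_pos hx, abs_of_neg hx, Real.arctan_neg]; ring
  · rw [if_neg (not_lt.mpr hx), abs_of_nonneg hx, one_mul]
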